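/- Let 𝔤 be a finite-dimensional real 2-step nilpotent Lie algebra, let Δ ⊆ 𝔤 be a subspace equipped with an inner product ρ, let E be a finite set of positive integers, let a, b : E → Δ, and define v : [0,1] → 𝔤 by v(t) := Σ_{n∈E} ( a_n cos(2πnt) − b_n sin(2πnt) ). Then the endpoint satisfies E(v) = Σ_{n∈E} (1/(4πn)) ⁅b_n, a_n⁆, and the energy satisfies ∫₀¹ ρ(v(t),v(t)) dt = (1/2) Σ_{n∈E} ( ρ(a_n,a_n) + ρ(b_n,b_n) ). -/

import Mathlib

open MeasureTheory

section Helpers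
open Real intervalIntegral


lemma sin2pik (k : ℤ) : Real.sin (2*π*k) = 0 := by
  have := Real.sin_int_mul_pi (2*k)
  push_cast at this
  rw [show 2*π*(k:ℝ) = 2*(k:ℝ)*π by ring, this]

lemma cos2pik (k : ℤ) : Real.cos (2*π*k) = 1 := by
  rw [show 2*π*(k:ℝ) = (k:ℝ)*(2*π) by ring, Real.cos_int_mul_two_pi k]

lemma intCos {k : ℝ} (hk : k ≠ 0) (t : ℝ) :
    ∫ s in (0:ℝ)..t, Real.cos (k*s) = Real.sin (k*t) / k := by
  rw [intervalIntegral.integral_comp_mul_left (fun x => Real.cos x) hk]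
  simp [integral_cos, smul_eq_mul]
  ring

lemma intSin {k : ℝ} (hk : k ≠ 0) (t : ℝ) :
    ∫ s in (0:ℝ)..t, Real.sin (k*s) = (1 - Real.cos (k*t)) / k := by
  rw [intervalIntegral.integral_comp_mul_left (fun x => Real.sin x) hk]
  simp [integral_sin, smul_eq_mul]
  ring

lemma twopik_ne {k : ℤ} (hk : k ≠ 0) : (2*π*(k:ℝ)) ≠ 0 := by
  have h1 : (k:ℝ) ≠ 0 := Int.cast_ne_zero.mpr hk
  have := Real.pi_ne_zero
  simp [h1, this]

lemma Icos1 (k : ℤ) : ∫ t in (0:ℝ)..1, Real.cos (2*π*k*t) = if k = 0 then 1 else 0 := by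
  by_cases hk : k = 0
  · simp [hk]
  · simp only [hk, if_false]
    rw [intCos (twopik_ne hk)]
    simp [sin2pik k]

lemma Isin1 (k : ℤ) : ∫ t in (0:ℝ)..1, Real.sin (2*π*k*t) = 0 := by
  by_cases hk : k = 0
  · simp [hk]
  · rw [intSin (twopik_ne hk)]
    simp [cos2pik k]

lemma contC (k : ℤ) : Continuous (fun t : ℝ => Real.cos (2*π*k*t)) := by fun_prop
lemma contS (k : ℤ) : Continuous (fun t : ℝ => Real.sin (2*π*k*t)) := by fun_prop



lemma IcosCos (m n : ℤ) (hm : 0 < m) (hn : 0 < n) :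
    ∫ t in (0:ℝ)..1, Real.cos (2*π*m*t) * Real.cos (2*π*n*t) = if m = n then 2⁻¹ else 0 := by
  have key : ∀ t : ℝ, Real.cos (2*π*m*t) * Real.cos (2*π*n*t)
      = (Real.cos (2*π*((m-n:ℤ):ℝ)*t) + Real.cos (2*π*((m+n:ℤ):ℝ)*t))/2 := by
    intro t
    rw [show (2*π*((m-n:ℤ):ℝ)*t) = 2*π*m*t - 2*π*n*t by push_cast; ring,
        show (2*π*((m+n:ℤ):ℝ)*t) = 2*π*m*t + 2*π*n*t by push_cast; ring,
        Real.cos_sub, Real.cos_add]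
    ring
  simp only [key]
  rw [intervalIntegral.integral_div, intervalIntegral.integral_add
      ((contC _).intervalIntegrable 0 1) ((contC _).intervalIntegrable 0 1),
    Icos1, Icos1]
  have hmn : m + n ≠ 0 := by omega
  simp only [hmn, if_false, sub_eq_zero]
  split_ifs <;> norm_num

lemma IsinSin (m n : ℤ) (hm : 0 < m) (hn : 0 < n) :
    ∫ t in (0:ℝ)..1, Real.sin (2*π*m*t) * Real.sin (2*π*n*t) = if m = n then 2⁻¹ else 0 := by
  have key : ∀ t : ℝ, Real.sin (2*π*m*t) * Real.sin (2*π*n*t)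
      = (Real.cos (2*π*((m-n:ℤ):ℝ)*t) - Real.cos (2*π*((m+n:ℤ):ℝ)*t))/2 := by
    intro t
    rw [show (2*π*((m-n:ℤ):ℝ)*t) = 2*π*m*t - 2*π*n*t by push_cast; ring,
        show (2*π*((m+n:ℤ):ℝ)*t) = 2*π*m*t + 2*π*n*t by push_cast; ring,
        Real.cos_sub, Real.cos_add]
    ring
  simp only [key]
  rw [intervalIntegral.integral_div, intervalIntegral.integral_sub
      ((contC _).intervalIntegrable 0 1) ((contC _).intervalIntegrable 0 1),
    Icos1, Icos1]
  have hmn : m + n ≠ 0 := by omega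
  simp only [hmn, if_false, sub_eq_zero]
  split_ifs <;> norm_num

lemma IsinCos (m n : ℤ) :
    ∫ t in (0:ℝ)..1, Real.sin (2*π*m*t) * Real.cos (2*π*n*t) = 0 := by
  have key : ∀ t : ℝ, Real.sin (2*π*m*t) * Real.cos (2*π*n*t)
      = (Real.sin (2*π*((m+n:ℤ):ℝ)*t) + Real.sin (2*π*((m-n:ℤ):ℝ)*t))/2 := by
    intro t
    rw [show (2*π*((m-n:ℤ):ℝ)*t) = 2*π*m*t - 2*π*n*t by push_cast; ring,
        show (2*π*((m+n:ℤ):ℝ)*t) = 2*π*m*t + 2*π*n*t by push_cast; ring,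
        Real.sin_sub, Real.sin_add]
    ring
  simp only [key]
  rw [intervalIntegral.integral_div, intervalIntegral.integral_add
      ((contS _).intervalIntegrable 0 1) ((contS _).intervalIntegrable 0 1),
    Isin1, Isin1]
  norm_num

lemma IcosSin (m n : ℤ) :
    ∫ t in (0:ℝ)..1, Real.cos (2*π*m*t) * Real.sin (2*π*n*t) = 0 := by
  rw [show (fun t : ℝ => Real.cos (2*π*m*t) * Real.sin (2*π*n*t))
      = fun t : ℝ => Real.sin (2*π*n*t) * Real.cos (2*π*m*t) from funext fun t => mul_comm _ _]
  exact IsinCos n m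

lemma bilinPtw {L M : Type*} [NormedAddCommGroup L] [NormedSpace ℝ L]
    [NormedAddCommGroup M] [NormedSpace ℝ M]
    (B : L →ₗ[ℝ] L →ₗ[ℝ] M) (c1 c2 e1 e2 : ℝ) (x1 x2 y1 y2 : L) :
    B (c1 • x1 - c2 • x2) (e1 • y1 - e2 • y2)
      = (c1 * e1) • B x1 y1 - (c1 * e2) • B x1 y2
        - (c2 * e1) • B x2 y1 + (c2 * e2) • B x2 y2 := by
  simp only [map_sub, _root_.map_smul, LinearMap.sub_apply, LinearMap.smul_apply, smul_sub, smul_smul]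
  module

lemma bilinCont {L M : Type*} [NormedAddCommGroup L] [NormedSpace ℝ L]
    [NormedAddCommGroup M] [NormedSpace ℝ M]
    (B : L →ₗ[ℝ] L →ₗ[ℝ] M) {c1 c2 e1 e2 : ℝ → ℝ}
    (h1 : Continuous c1) (h2 : Continuous c2) (h3 : Continuous e1) (h4 : Continuous e2)
    (x1 x2 y1 y2 : L) :
    Continuous fun t => B (c1 t • x1 - c2 t • x2) (e1 t • y1 - e2 t • y2) := by
  simp only [bilinPtw]
  fun_prop

lemma bilinInt {L M : Type*} [NormedAddCommGroup L] [NormedSpace ℝ L]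
    [NormedAddCommGroup M] [NormedSpace ℝ M] [CompleteSpace M]
    (B : L →ₗ[ℝ] L →ₗ[ℝ] M) {c1 c2 e1 e2 : ℝ → ℝ}
    (h1 : Continuous c1) (h2 : Continuous c2) (h3 : Continuous e1) (h4 : Continuous e2)
    (x1 x2 y1 y2 : L) :
    ∫ t in (0:ℝ)..1, B (c1 t • x1 - c2 t • x2) (e1 t • y1 - e2 t • y2)
      = (∫ t in (0:ℝ)..1, c1 t * e1 t) • B x1 y1 - (∫ t in (0:ℝ)..1, c1 t * e2 t) • B x1 y2
        - (∫ t in (0:ℝ)..1, c2 t * e1 t) • B x2 y1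
        + (∫ t in (0:ℝ)..1, c2 t * e2 t) • B x2 y2 := by
  simp only [bilinPtw]
  have i1 : IntervalIntegrable (fun t => (c1 t * e1 t) • B x1 y1) MeasureTheory.volume 0 1 := by
    apply Continuous.intervalIntegrable; fun_prop
  have i2 : IntervalIntegrable (fun t => (c1 t * e2 t) • B x1 y2) MeasureTheory.volume 0 1 := by
    apply Continuous.intervalIntegrable; fun_prop
  have i3 : IntervalIntegrable (fun t => (c2 t * e1 t) • B x2 y1) MeasureTheory.volume 0 1 := by
    apply Continuous.intervalIntegrable; fun_prop
  have i4 : IntervalIntegrable (fun t => (c2 t * e2 t) • B x2 y2) MeasureTheory.volume 0 1 := by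
    apply Continuous.intervalIntegrable; fun_prop
  rw [intervalIntegral.integral_add (((i1.sub i2).sub i3)) i4,
      intervalIntegral.integral_sub (i1.sub i2) i3,
      intervalIntegral.integral_sub i1 i2,
      intervalIntegral.integral_smul_const, intervalIntegral.integral_smul_const,
      intervalIntegral.integral_smul_const, intervalIntegral.integral_smul_const]


lemma P1 (m n : ℤ) :
    ∫ t in (0:ℝ)..1, (Real.sin (2*π*m*t)/(2*π*m)) * Real.cos (2*π*n*t) = 0 := by
  have key : ∀ t : ℝ, (Real.sin (2*π*m*t)/(2*π*m)) * Real.cos (2*π*n*t)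
      = (Real.sin (2*π*m*t) * Real.cos (2*π*n*t)) / (2*π*m) := fun t => by ring
  simp only [key, intervalIntegral.integral_div, IsinCos]
  simp

lemma P2 (m n : ℤ) (hm : 0 < m) (hn : 0 < n) :
    ∫ t in (0:ℝ)..1, (Real.sin (2*π*m*t)/(2*π*m)) * Real.sin (2*π*n*t)
      = if m = n then (4*π*(m:ℝ))⁻¹ else 0 := by
  have key : ∀ t : ℝ, (Real.sin (2*π*m*t)/(2*π*m)) * Real.sin (2*π*n*t)
      = (Real.sin (2*π*m*t) * Real.sin (2*π*n*t)) / (2*π*m) := fun t => by ring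
  simp only [key, intervalIntegral.integral_div, IsinSin m n hm hn]
  have hm0 : (m:ℝ) ≠ 0 := Int.cast_ne_zero.mpr hm.ne'
  split_ifs
  · field_simp; ring
  · simp

lemma P3 (m n : ℤ) (hm : 0 < m) (hn : 0 < n) :
    ∫ t in (0:ℝ)..1, ((1 - Real.cos (2*π*m*t))/(2*π*m)) * Real.cos (2*π*n*t)
      = if m = n then -(4*π*(m:ℝ))⁻¹ else 0 := by
  have key : ∀ t : ℝ, ((1 - Real.cos (2*π*m*t))/(2*π*m)) * Real.cos (2*π*n*t)
      = (Real.cos (2*π*n*t) - Real.cos (2*π*m*t) * Real.cos (2*π*n*t)) / (2*π*m) :=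
    fun t => by ring
  simp only [key, intervalIntegral.integral_div]
  rw [intervalIntegral.integral_sub ((contC n).intervalIntegrable 0 1)
        ((show Continuous (fun t : ℝ => Real.cos (2*π*m*t) * Real.cos (2*π*n*t)) from (contC m).mul (contC n)).intervalIntegrable 0 1),
      Icos1, IcosCos m n hm hn]
  have hm0 : (m:ℝ) ≠ 0 := Int.cast_ne_zero.mpr hm.ne'
  have hn0 : n ≠ 0 := hn.ne'
  simp only [hn0, if_false]
  split_ifs
  · field_simp; ring
  · norm_num

lemma P4 (m n : ℤ) :
    ∫ t in (0:ℝ)..1, ((1 - Real.cos (2*π*m*t))/(2*π*m)) * Real.sin (2*π*n*t) = 0 := by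
  have key : ∀ t : ℝ, ((1 - Real.cos (2*π*m*t))/(2*π*m)) * Real.sin (2*π*n*t)
      = (Real.sin (2*π*n*t) - Real.cos (2*π*m*t) * Real.sin (2*π*n*t)) / (2*π*m) :=
    fun t => by ring
  simp only [key, intervalIntegral.integral_div]
  rw [intervalIntegral.integral_sub ((contS n).intervalIntegrable 0 1)
        ((show Continuous (fun t : ℝ => Real.cos (2*π*m*t) * Real.sin (2*π*n*t)) from (contC m).mul (contS n)).intervalIntegrable 0 1),
      Isin1, IcosSin]
  simp

end Helpers

/-- The endpoint of the horizontal curve with control `u` in the 2-step model group `(𝔤,∗)`. -/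
noncomputable def endpointMap {L : Type*} [NormedAddCommGroup L] [NormedSpace ℝ L]
    (bracket : L →ₗ[ℝ] L →ₗ[ℝ] L) (u : ℝ → L) : L :=
  (∫ t in (0:ℝ)..1, u t) +
    (2⁻¹ : ℝ) • ∫ t in (0:ℝ)..1, bracket (∫ s in (0:ℝ)..t, u s) (u t)

/-- for `v(t) = Σ_{n∈E} (a_n cos(2πnt) − b_n sin(2πnt))` with `E` a finite set
of positive integers and `a_n, b_n ∈ Δ`, one has `E(v) = Σ_{n∈E} (1/(4πn)) ⁅b_n, a_n⁆`, and
`∫₀¹ ρ(v,v) = (1/2) Σ_{n∈E} (ρ(a_n,a_n) + ρ(b_n,b_n))`. -/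
theorem stmt_4 {L : Type*} [NormedAddCommGroup L] [NormedSpace ℝ L] [FiniteDimensional ℝ L]
    (bracket : L →ₗ[ℝ] L →ₗ[ℝ] L)
    (halt : ∀ x : L, bracket x x = 0)
    (h2step : ∀ x y z : L, bracket (bracket x y) z = 0)
    (Δ : Submodule ℝ L)
    -- `ρ` is an inner product on `Δ`
    (ρ : L →ₗ[ℝ] L →ₗ[ℝ] ℝ)
    (hsym : ∀ x ∈ Δ, ∀ y ∈ Δ, ρ x y = ρ y x)
    (hpos : ∀ x ∈ Δ, x ≠ 0 → 0 < ρ x x)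
    (E : Finset ℤ) (hE : ∀ n ∈ E, 0 < n)
    (a b : ℤ → L) (ha : ∀ n ∈ E, a n ∈ Δ) (hb : ∀ n ∈ E, b n ∈ Δ)
    (v : ℝ → L)
    (hv : ∀ t : ℝ, v t = ∑ n ∈ E,
      (Real.cos (2 * Real.pi * (n : ℝ) * t) • a n - Real.sin (2 * Real.pi * (n : ℝ) * t) • b n)) :
    endpointMap bracket v =
      ∑ n ∈ E, ((4 * Real.pi * (n : ℝ))⁻¹) • bracket (b n) (a n) ∧
    (∫ t in (0:ℝ)..1, ρ (v t) (v t)) =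
      (2⁻¹ : ℝ) * ∑ n ∈ E, (ρ (a n) (a n) + ρ (b n) (b n)) := by
  have hπ : Real.pi ≠ 0 := Real.pi_ne_zero
  have hanti : ∀ x y : L, bracket x y = - bracket y x := by
    intro x y
    have h := halt (x + y)
    simp only [map_add, LinearMap.add_apply, halt x, halt y, zero_add, add_zero] at h
    exact eq_neg_of_add_eq_zero_right h
  have hfc : ∀ n : ℤ, Continuous fun t : ℝ =>
      Real.cos (2*Real.pi*n*t) • a n - Real.sin (2*Real.pi*n*t) • b n := fun n => by fun_prop
  -- first integral is zero
  have hI1 : (∫ t in (0:ℝ)..1, v t) = 0 := by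
    rw [intervalIntegral.integral_congr (fun t _ => hv t),
        intervalIntegral.integral_finset_sum (fun n _ => (hfc n).intervalIntegrable 0 1)]
    refine Finset.sum_eq_zero fun n hn => ?_
    rw [intervalIntegral.integral_sub (by apply Continuous.intervalIntegrable; fun_prop)
          (by apply Continuous.intervalIntegrable; fun_prop),
        intervalIntegral.integral_smul_const, intervalIntegral.integral_smul_const,
        Icos1, Isin1]
    have : n ≠ 0 := (hE n hn).ne'
    simp [this]
  -- primitive of v
  have hV : ∀ t : ℝ, (∫ s in (0:ℝ)..t, v s) = ∑ m ∈ E,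
      ((Real.sin (2*Real.pi*m*t)/(2*Real.pi*m)) • a m
        - ((1 - Real.cos (2*Real.pi*m*t))/(2*Real.pi*m)) • b m) := by
    intro t
    rw [intervalIntegral.integral_congr (fun s _ => hv s),
        intervalIntegral.integral_finset_sum (fun n _ => (hfc n).intervalIntegrable 0 t)]
    refine Finset.sum_congr rfl fun n hn => ?_
    have hn0 : n ≠ 0 := (hE n hn).ne'
    rw [intervalIntegral.integral_sub (by apply Continuous.intervalIntegrable; fun_prop)
          (by apply Continuous.intervalIntegrable; fun_prop),
        intervalIntegral.integral_smul_const, intervalIntegral.integral_smul_const,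
        intCos (twopik_ne hn0), intSin (twopik_ne hn0)]
  -- second integrand as a double sum
  have hbr : ∀ t : ℝ, bracket (∫ s in (0:ℝ)..t, v s) (v t) = ∑ m ∈ E, ∑ n ∈ E,
      bracket ((Real.sin (2*Real.pi*m*t)/(2*Real.pi*m)) • a m
          - ((1 - Real.cos (2*Real.pi*m*t))/(2*Real.pi*m)) • b m)
        (Real.cos (2*Real.pi*n*t) • a n - Real.sin (2*Real.pi*n*t) • b n) := by
    intro t
    rw [hV t, hv t]
    simp only [map_sum, LinearMap.sum_apply]
    exact Finset.sum_comm
  -- value of the second integral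
  have hI2 : (∫ t in (0:ℝ)..1, bracket (∫ s in (0:ℝ)..t, v s) (v t))
      = ∑ n ∈ E, ((2*Real.pi*(n:ℝ))⁻¹) • bracket (b n) (a n) := by
    rw [intervalIntegral.integral_congr (fun t _ => hbr t),
        intervalIntegral.integral_finset_sum (fun m _ =>
          (continuous_finset_sum _ fun n _ => bilinCont bracket (by fun_prop) (by fun_prop)
            (by fun_prop) (by fun_prop) (a m) (b m) (a n) (b n)).intervalIntegrable 0 1)]
    have step : ∀ m ∈ E, (∫ t in (0:ℝ)..1, ∑ n ∈ E,
        bracket ((Real.sin (2*Real.pi*m*t)/(2*Real.pi*m)) • a m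
            - ((1 - Real.cos (2*Real.pi*m*t))/(2*Real.pi*m)) • b m)
          (Real.cos (2*Real.pi*n*t) • a n - Real.sin (2*Real.pi*n*t) • b n))
        = ∑ n ∈ E, (if m = n then ((2*Real.pi*(n:ℝ))⁻¹) • bracket (b n) (a n) else 0) := by
      intro m hm
      rw [intervalIntegral.integral_finset_sum (fun n _ =>
        (bilinCont bracket (by fun_prop) (by fun_prop) (by fun_prop) (by fun_prop)
          (a m) (b m) (a n) (b n)).intervalIntegrable 0 1)]
      refine Finset.sum_congr rfl fun n hn => ?_
      rw [bilinInt bracket (by fun_prop) (by fun_prop) (by fun_prop) (by fun_prop),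
          P1 m n, P2 m n (hE m hm) (hE n hn), P3 m n (hE m hm) (hE n hn), P4 m n]
      by_cases h : m = n
      · subst h
        simp only [eq_self_iff_true, if_true]
        rw [hanti (a m) (b m)]
        have hm0 : (m:ℝ) ≠ 0 := Int.cast_ne_zero.mpr (hE m hm).ne'
        match_scalars <;> field_simp <;> ring
      · simp [h]
    rw [Finset.sum_congr rfl step]
    refine (Finset.sum_congr rfl fun m hm => ?_).trans rfl
    rw [Finset.sum_ite_eq]
    exact if_pos hm
  constructor
  · unfold endpointMap
    rw [hI1, hI2, zero_add, Finset.smul_sum]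
    refine Finset.sum_congr rfl fun n hn => ?_
    rw [smul_smul]
    congr 1
    have hn0 : (n:ℝ) ≠ 0 := Int.cast_ne_zero.mpr (hE n hn).ne'
    field_simp
    ring
  · -- energy
    have hρ : ∀ t : ℝ, ρ (v t) (v t) = ∑ m ∈ E, ∑ n ∈ E,
        ρ (Real.cos (2*Real.pi*m*t) • a m - Real.sin (2*Real.pi*m*t) • b m)
          (Real.cos (2*Real.pi*n*t) • a n - Real.sin (2*Real.pi*n*t) • b n) := by
      intro t
      rw [hv t]
      simp only [map_sum, LinearMap.sum_apply]
      exact Finset.sum_comm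
    rw [intervalIntegral.integral_congr (fun t _ => hρ t),
        intervalIntegral.integral_finset_sum (fun m _ =>
          (continuous_finset_sum _ fun n _ => bilinCont ρ (by fun_prop) (by fun_prop)
            (by fun_prop) (by fun_prop) (a m) (b m) (a n) (b n)).intervalIntegrable 0 1)]
    have step : ∀ m ∈ E, (∫ t in (0:ℝ)..1, ∑ n ∈ E,
        ρ (Real.cos (2*Real.pi*m*t) • a m - Real.sin (2*Real.pi*m*t) • b m)
          (Real.cos (2*Real.pi*n*t) • a n - Real.sin (2*Real.pi*n*t) • b n))
        = ∑ n ∈ E, (if m = n then (2⁻¹ : ℝ) * (ρ (a n) (a n) + ρ (b n) (b n)) else 0) := by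
      intro m hm
      rw [intervalIntegral.integral_finset_sum (fun n _ =>
        (bilinCont ρ (by fun_prop) (by fun_prop) (by fun_prop) (by fun_prop)
          (a m) (b m) (a n) (b n)).intervalIntegrable 0 1)]
      refine Finset.sum_congr rfl fun n hn => ?_
      rw [bilinInt ρ (by fun_prop) (by fun_prop) (by fun_prop) (by fun_prop),
          IcosCos m n (hE m hm) (hE n hn), IcosSin m n, IsinCos m n,
          IsinSin m n (hE m hm) (hE n hn)]
      by_cases h : m = n
      · subst h
        simp only [eq_self_iff_true, if_true, smul_eq_mul]
        ring
      · simp [h]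
    rw [Finset.sum_congr rfl step]
    rw [Finset.mul_sum]
    refine Finset.sum_congr rfl fun m hm => ?_
    rw [Finset.sum_ite_eq]
    exact if_pos hm
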